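/- Let H be a Hilbert space written as an orthogonal direct sum H = ⊕_{j∈J} H_j of closed subspaces, and for each j let {ψ_{j,γ}}_{γ∈Γ} ⊆ H_j be a Parseval frame for H_j, over a common countable index set Γ. Assume that for all j ≠ j' and all φ ∈ H, Σ_γ ⟨φ, ψ_{j,γ}⟩ · conj(⟨φ, ψ_{j',γ}⟩) = 0 (orthogonality of the ranges of the coefficient operators). Then {Σ_j ψ_{j,γ}}_{γ∈Γ} is a Parseval frame for H, provided Σ_j ψ_{j,γ} converges in H for each γ. -/

import Mathlib

open scoped InnerProductSpace

set_option maxHeartbeats 2000000 in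
set_option synthInstance.maxHeartbeats 400000 in
/-- If H is the orthogonal direct sum of closed subspaces H_j, each carrying a
Parseval frame {ψ_{j,γ}}_{γ∈Γ}, and the ranges of the coefficient operators are
pairwise orthogonal, then {Σ_j ψ_{j,γ}}_{γ∈Γ} is a Parseval frame for H. -/
theorem direct_sum_parseval_frame
    {H : Type*} [NormedAddCommGroup H] [InnerProductSpace ℂ H] [CompleteSpace H]
    {J : Type*} [Countable J] {Γ : Type*} [Countable Γ]
    (Hsub : J → Submodule ℂ H) (hclosed : ∀ j, IsClosed ((Hsub j : Set H)))
    (horthsub : ∀ j j' : J, j ≠ j' → Hsub j' ≤ (Hsub j)ᗮ)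
    (hdense : (⨆ j : J, Hsub j).topologicalClosure = ⊤)
    (ψ : J → Γ → H) (hmem : ∀ j γ, ψ j γ ∈ Hsub j)
    (hP : ∀ j : J, ∀ φ ∈ Hsub j, ‖φ‖ ^ 2 = ∑' γ : Γ, ‖⟪φ, ψ j γ⟫_ℂ‖ ^ 2)
    (horth : ∀ j j' : J, j ≠ j' → ∀ φ : H,
      ∑' γ : Γ, ⟪φ, ψ j γ⟫_ℂ * (starRingEnd ℂ) ⟪φ, ψ j' γ⟫_ℂ = 0)
    (Ψ : Γ → H) (hΨ : ∀ γ : Γ, HasSum (fun j : J => ψ j γ) (Ψ γ)) :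
    ∀ φ : H, ‖φ‖ ^ 2 = ∑' γ : Γ, ‖⟪φ, Ψ γ⟫_ℂ‖ ^ 2 := by
  classical
  intro φ
  haveI : ∀ j, CompleteSpace (Hsub j) := fun j => (hclosed j).completeSpace_coe
  have hO : OrthogonalFamily ℂ (fun j => Hsub j) (fun j => (Hsub j).subtypeₗᵢ) := by
    intro i j hij v w
    exact (Submodule.mem_orthogonal (Hsub i) (w : H)).1 (horthsub i j hij w.2) v v.2
  have hS : IsHilbertSum ℂ (fun j => Hsub j) (fun j => (Hsub j).subtypeₗᵢ) :=
    IsHilbertSum.mkInternal _ hO (le_of_eq hdense.symm)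
  set w : lp (fun j => Hsub j) 2 := hS.linearIsometryEquiv φ with hw
  set x : J → H := fun j => (w j : H) with hxdef
  have hxmem : ∀ j, x j ∈ Hsub j := fun j => (w j).2
  have hx : HasSum x φ := by
    have h := hS.hasSum_linearIsometryEquiv_symm w
    rwa [hw, LinearIsometryEquiv.symm_apply_apply] at h
  have hxorth : ∀ j j' : J, j ≠ j' → ∀ v ∈ Hsub j, ⟪v, x j'⟫_ℂ = 0 := fun j j' hne v hv =>
    (Submodule.mem_orthogonal (Hsub j) (x j')).1 (horthsub j j' hne (hxmem j')) v hv
  have hinner_xφ : ∀ j, ⟪x j, φ⟫_ℂ = (‖x j‖ : ℂ) ^ 2 := by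
    intro j
    have h1 : HasSum (fun j' => ⟪x j, x j'⟫_ℂ) ⟪x j, φ⟫_ℂ := (innerSL ℂ (x j)).hasSum hx
    have hfun : (fun j' => ⟪x j, x j'⟫_ℂ) =
        fun j' => if j' = j then ⟪x j, x j⟫_ℂ else 0 := by
      funext j'
      by_cases h : j' = j
      · simp [h]
      · rw [if_neg h, hxorth j j' (Ne.symm h) (x j) (hxmem j)]
    rw [hfun] at h1
    rw [h1.unique (hasSum_ite_eq j _), inner_self_eq_norm_sq_to_K]
    norm_cast
  have hcoef : ∀ j γ, ⟪φ, ψ j γ⟫_ℂ = ⟪x j, ψ j γ⟫_ℂ := by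
    intro j γ
    have h1 : HasSum (fun j' => ⟪ψ j γ, x j'⟫_ℂ) ⟪ψ j γ, φ⟫_ℂ := (innerSL ℂ (ψ j γ)).hasSum hx
    have hfun : (fun j' => ⟪ψ j γ, x j'⟫_ℂ) =
        fun j' => if j' = j then ⟪ψ j γ, x j⟫_ℂ else 0 := by
      funext j'
      by_cases h : j' = j
      · simp [h]
      · rw [if_neg h, hxorth j j' (Ne.symm h) (ψ j γ) (hmem j γ)]
    rw [hfun] at h1
    have h2 := h1.unique (hasSum_ite_eq j _)
    rw [← inner_conj_symm, h2, inner_conj_symm]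
  have hPx : ∀ j, ‖x j‖ ^ 2 = ∑' γ, ‖⟪φ, ψ j γ⟫_ℂ‖ ^ 2 := by
    intro j
    rw [hP j (x j) (hxmem j)]
    exact tsum_congr fun γ => by rw [hcoef j γ]
  have hsum2 : ∀ j, Summable (fun γ => ‖⟪φ, ψ j γ⟫_ℂ‖ ^ 2) := by
    intro j
    by_cases hns : Summable (fun γ => ‖⟪φ, ψ j γ⟫_ℂ‖ ^ 2)
    · exact hns
    · exfalso
      have h0 : ‖x j‖ ^ 2 = 0 := by
        rw [hPx j, tsum_eq_zero_of_not_summable hns]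
      have hxj : x j = 0 := by
        rw [sq_eq_zero_iff, norm_eq_zero] at h0
        exact h0
      apply hns
      have heq : (fun γ => ‖⟪φ, ψ j γ⟫_ℂ‖ ^ 2) = fun _ => (0 : ℝ) := by
        funext γ
        rw [hcoef j γ, hxj]
        simp
      rw [heq]
      exact summable_zero
  -- the coefficient sequences as elements of ℓ²(Γ)
  have hmemF : ∀ j, Memℓp (fun γ => ⟪φ, ψ j γ⟫_ℂ) 2 := by
    intro j
    apply memℓp_gen
    have h2 : (2 : ENNReal).toReal = 2 := by norm_num
    rw [h2]
    have := hsum2 j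
    refine this.congr fun γ => ?_
    rw [← Real.rpow_natCast ‖⟪φ, ψ j γ⟫_ℂ‖ 2]
    norm_num
  set F : J → lp (fun (_ : Γ) => ℂ) 2 := fun j => ⟨fun γ => ⟪φ, ψ j γ⟫_ℂ, hmemF j⟩ with hFdef
  have hFapp : ∀ j γ, F j γ = ⟪φ, ψ j γ⟫_ℂ := fun j γ => rfl
  have hFinner : ∀ i j, i ≠ j → ⟪F i, F j⟫_ℂ = 0 := by
    intro i j hij
    rw [lp.inner_eq_tsum]
    calc ∑' γ, ⟪F i γ, F j γ⟫_ℂ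
        = ∑' γ, star (⟪φ, ψ i γ⟫_ℂ * (starRingEnd ℂ) ⟪φ, ψ j γ⟫_ℂ) := by
          refine tsum_congr fun γ => ?_
          rw [hFapp, hFapp, RCLike.inner_apply]
          simp only [star_mul', RCLike.star_def, Complex.conj_conj]
          ring
      _ = star (∑' γ, ⟪φ, ψ i γ⟫_ℂ * (starRingEnd ℂ) ⟪φ, ψ j γ⟫_ℂ) := by rw [tsum_star]
      _ = 0 := by rw [horth i j hij φ, star_zero]
  have hFself : ∀ j, ⟪F j, F j⟫_ℂ = ((‖x j‖ ^ 2 : ℝ) : ℂ) := by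
    intro j
    rw [lp.inner_eq_tsum]
    calc ∑' γ, ⟪F j γ, F j γ⟫_ℂ
        = ∑' γ, ((‖⟪φ, ψ j γ⟫_ℂ‖ ^ 2 : ℝ) : ℂ) := by
          refine tsum_congr fun γ => ?_
          rw [hFapp, inner_self_eq_norm_sq_to_K]
          norm_cast
      _ = ((∑' γ, ‖⟪φ, ψ j γ⟫_ℂ‖ ^ 2 : ℝ) : ℂ) := (Complex.ofReal_tsum _).symm
      _ = ((‖x j‖ ^ 2 : ℝ) : ℂ) := by rw [← hPx j]
  have hxs2 : Summable (fun j => ‖x j‖ ^ 2) := by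
    have hs : Summable (fun j => (Hsub j).subtypeₗᵢ (w j)) := hx.summable
    exact (hO.summable_iff_norm_sq_summable w).1 hs
  have hFnorm : ∀ j, ‖F j‖ ^ 2 = ‖x j‖ ^ 2 := by
    intro j
    have h2 := hFself j
    rw [inner_self_eq_norm_sq_to_K, ← RCLike.ofReal_pow] at h2
    exact RCLike.ofReal_inj.mp h2
  have hFs2 : Summable (fun j => ‖F j‖ ^ 2) := hxs2.congr fun j => (hFnorm j).symm
  -- summability of F via an orthogonal family of spans
  set Wsp : J → Submodule ℂ (lp (fun (_ : Γ) => ℂ) 2) := fun j => ℂ ∙ F j with hWspDef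
  haveI : ∀ j, CompleteSpace (Wsp j) := fun j => FiniteDimensional.complete ℂ _
  have hWO : OrthogonalFamily ℂ (fun j => Wsp j) (fun j => (Wsp j).subtypeₗᵢ) := by
    intro i j hij v u
    obtain ⟨a, ha⟩ := Submodule.mem_span_singleton.1 v.2
    obtain ⟨b, hb⟩ := Submodule.mem_span_singleton.1 u.2
    show ⟪(v : lp (fun (_ : Γ) => ℂ) 2), (u : lp (fun (_ : Γ) => ℂ) 2)⟫_ℂ = 0
    rw [← ha, ← hb, inner_smul_left, inner_smul_right, hFinner i j hij]
    ring
  have hFsummable : Summable F := by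
    have hmemW : ∀ j, F j ∈ Wsp j := fun j => Submodule.mem_span_singleton_self _
    have hs := (hWO.summable_iff_norm_sq_summable (fun j => ⟨F j, hmemW j⟩)).2
      (hFs2.congr fun j => rfl)
    exact hs.congr fun j => rfl
  obtain ⟨L, hL⟩ := hFsummable
  -- pointwise identification of the limit
  have hLγ : ∀ γ, L γ = ⟪φ, Ψ γ⟫_ℂ := by
    intro γ
    have h1 : HasSum (fun j => ⟪(lp.single 2 γ (1 : ℂ) : lp (fun (_ : Γ) => ℂ) 2), F j⟫_ℂ)
        ⟪(lp.single 2 γ (1 : ℂ) : lp (fun (_ : Γ) => ℂ) 2), L⟫_ℂ :=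
      (innerSL ℂ _).hasSum hL
    have hfun : (fun j => ⟪(lp.single 2 γ (1 : ℂ) : lp (fun (_ : Γ) => ℂ) 2), F j⟫_ℂ)
        = fun j => F j γ := by
      funext j
      rw [lp.inner_single_left, RCLike.inner_apply]
      simp
    rw [hfun, lp.inner_single_left, RCLike.inner_apply] at h1
    simp only [map_one, one_mul, mul_one] at h1
    have h2 : HasSum (fun j => ⟪φ, ψ j γ⟫_ℂ) ⟪φ, Ψ γ⟫_ℂ := (innerSL ℂ φ).hasSum (hΨ γ)
    exact (h1.congr_fun fun j => hFapp j γ).unique h2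
  have hFL : ∀ j, ⟪F j, L⟫_ℂ = ((‖x j‖ ^ 2 : ℝ) : ℂ) := by
    intro j
    have h1 : HasSum (fun j' => ⟪F j, F j'⟫_ℂ) ⟪F j, L⟫_ℂ := (innerSL ℂ (F j)).hasSum hL
    have hfun : (fun j' => ⟪F j, F j'⟫_ℂ)
        = fun j' => if j' = j then ((‖x j‖ ^ 2 : ℝ) : ℂ) else 0 := by
      funext j'
      by_cases h : j' = j
      · rw [if_pos h, h, hFself j]
      · rw [if_neg h, hFinner j j' (Ne.symm h)]
    rw [hfun] at h1
    exact h1.unique (hasSum_ite_eq j _)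
  have hLL : ⟪L, L⟫_ℂ = ⟪φ, φ⟫_ℂ := by
    have h1 : HasSum (fun j => ⟪L, F j⟫_ℂ) ⟪L, L⟫_ℂ := (innerSL ℂ L).hasSum hL
    have h2 : HasSum (fun j => ⟪φ, x j⟫_ℂ) ⟪φ, φ⟫_ℂ := (innerSL ℂ φ).hasSum hx
    have e1 : (fun j => ⟪L, F j⟫_ℂ) = fun j => ((‖x j‖ ^ 2 : ℝ) : ℂ) := by
      funext j
      rw [← inner_conj_symm, hFL j, Complex.conj_ofReal]
    have e2 : (fun j => ⟪φ, x j⟫_ℂ) = fun j => ((‖x j‖ ^ 2 : ℝ) : ℂ) := by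
      funext j
      rw [← inner_conj_symm, hinner_xφ j, map_pow]
      rw [Complex.conj_ofReal]
      norm_cast
    rw [e1] at h1
    rw [e2] at h2
    exact h1.unique h2
  have hfinal : ((∑' γ, ‖L γ‖ ^ 2 : ℝ) : ℂ) = ((‖φ‖ ^ 2 : ℝ) : ℂ) := by
    calc ((∑' γ, ‖L γ‖ ^ 2 : ℝ) : ℂ)
        = ∑' γ, ((‖L γ‖ ^ 2 : ℝ) : ℂ) := Complex.ofReal_tsum _
      _ = ∑' γ, ⟪L γ, L γ⟫_ℂ := by
          refine tsum_congr fun γ => ?_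
          rw [inner_self_eq_norm_sq_to_K]
          norm_cast
      _ = ⟪L, L⟫_ℂ := (lp.inner_eq_tsum L L).symm
      _ = ⟪φ, φ⟫_ℂ := hLL
      _ = ((‖φ‖ ^ 2 : ℝ) : ℂ) := by
          rw [inner_self_eq_norm_sq_to_K]
          norm_cast
  have hkey : (∑' γ, ‖L γ‖ ^ 2 : ℝ) = ‖φ‖ ^ 2 := by exact_mod_cast hfinal
  rw [← hkey]
  exact tsum_congr fun γ => by rw [hLγ γ]
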